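/- Parking games are supermodular: for any parking function α of length n, the characteristic function c_α satisfies c_α(S ∪ {i}) - c_α(S) ≤ c_α(T ∪ {i}) - c_α(T) for all i ∈ [n] and all S ⊆ T ⊆ [n] \ {i}. -/

import Mathlib

/-- Sequential parking process on a street with `m` spots: given the list of
preferences of the cars (in arrival order) and the set of already occupied
spots, return the list of spots in which the cars park (in arrival order),
or `none` if some car fails to park. Car with preference `a` parks in the
first unoccupied spot `j` with `a ≤ j ≤ m`. -/
def park (m : ℕ) : List ℕ → Finset ℕ → Option (List ℕ)
  | [], _ => some []
  | a :: as, occ =>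
    match ((List.range' a (m + 1 - a)).filter fun j => decide (j ∉ occ)).head? with
    | none => none
    | some p => (park m as (insert p occ)).map (p :: ·)

/-- `α` is an `(n, m)`-parking function: `n` cars with preferences in `[m]`,
all of which park successfully. -/
def IsPF (n m : ℕ) (α : List ℕ) : Prop :=
  α.length = n ∧ (∀ a ∈ α, 1 ≤ a ∧ a ≤ m) ∧ (park m α ∅).isSome

/-- Total displacement: the sum over cars of (parking spot − preference). -/
def disp (m : ℕ) (α : List ℕ) : ℕ :=
  match park m α ∅ with
  | some ps => ((ps.zip α).map fun x => x.1 - x.2).sum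
  | none => 0

/-- The set of spots occupied at the end of the parking process. -/
def occSet (m : ℕ) (α : List ℕ) : Finset ℕ :=
  match park m α ∅ with
  | some ps => ps.toFinset
  | none => ∅

/-- The characteristic function of the parking game of `α`: the total
displacement of the sub-tuple of preferences indexed by the coalition `S`,
parked on a street with `n` spots. -/
def gameCost (n : ℕ) (α : Fin n → ℕ) (S : Finset (Fin n)) : ℕ :=
  disp n ((S.sort (· ≤ ·)).map α)

/-- The Shapley value of a coalitional cost game `c` on players `Fin n`. -/
noncomputable def shapley (n : ℕ) (c : Finset (Fin n) → ℕ) (i : Fin n) : ℚ :=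
  (1 / (n.factorial : ℚ)) * ∑ π : Equiv.Perm (Fin n),
    ((c (Finset.univ.filter fun j => π j ≤ π i) : ℚ) -
     (c (Finset.univ.filter fun j => π j < π i) : ℚ))


/-- count of preferences ≤ t, as an integer -/
def cnt (β : List ℕ) (t : ℕ) : ℤ := (β.countP fun a => decide (a ≤ t) : ℕ)

/-- number of free spots in (t, j] -/
def freeC (occ : Finset ℕ) (t j : ℕ) : ℤ := (((Finset.Ioc t j).filter (· ∉ occ)).card : ℤ)

def gg (β : List ℕ) (occ : Finset ℕ) (j t : ℕ) : ℤ :=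
  cnt β j - cnt β t - freeC occ t j

def FF (β : List ℕ) (occ : Finset ℕ) (j : ℕ) : ℤ :=
  (Finset.range (j+1)).sup' Finset.nonempty_range_add_one (gg β occ j)

lemma cnt_mono (β : List ℕ) {t u : ℕ} (h : t ≤ u) : cnt β t ≤ cnt β u := by
  unfold cnt
  exact_mod_cast List.countP_mono_left (fun a _ hb => by
    simp only [decide_eq_true_eq] at *; omega)

lemma gg_self (β : List ℕ) (occ : Finset ℕ) (j : ℕ) : gg β occ j j = 0 := by
  simp [gg, freeC]

lemma FF_nonneg (β : List ℕ) (occ : Finset ℕ) (j : ℕ) : 0 ≤ FF β occ j := by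
  have := Finset.le_sup' (gg β occ j) (b := j) (by simp : j ∈ Finset.range (j+1))
  rw [gg_self] at this; exact this

lemma freeC_split (occ : Finset ℕ) {t u j : ℕ} (htu : t ≤ u) (huj : u ≤ j) :
    freeC occ t j = freeC occ t u + freeC occ u j := by
  unfold freeC
  rw [← Nat.cast_add, Nat.cast_inj, ← Finset.card_union_of_disjoint, ← Finset.filter_union,
    Finset.Ioc_union_Ioc_eq_Ioc htu huj]
  refine Finset.disjoint_filter_filter ?_
  rw [Finset.disjoint_left]
  intro q hq hq2
  simp only [Finset.mem_Ioc] at *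
  omega

/-- monotonicity towards smaller t when the interval in between is fully occupied -/
lemma gg_mono_occ (β : List ℕ) (occ : Finset ℕ) {t' t j : ℕ} (h1 : t' ≤ t) (h2 : t ≤ j)
    (hocc : ∀ q, t' < q → q ≤ t → q ∈ occ) : gg β occ j t ≤ gg β occ j t' := by
  have hsplit := freeC_split occ h1 h2
  have hzero : freeC occ t' t = 0 := by
    unfold freeC
    rw [Nat.cast_eq_zero, Finset.card_eq_zero, Finset.filter_eq_empty_iff]
    intro q hq
    simp only [Finset.mem_Ioc] at hq
    simp [hocc q hq.1 hq.2]
  have := cnt_mono β h1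
  unfold gg; omega

lemma cnt_cons (a : ℕ) (as : List ℕ) (t : ℕ) :
    cnt (a :: as) t = cnt as t + (if a ≤ t then 1 else 0) := by
  unfold cnt
  rw [List.countP_cons]
  split <;> simp_all

lemma gg_cons (a : ℕ) (as : List ℕ) (occ : Finset ℕ) {j t : ℕ} (ht : t ≤ j) :
    gg (a :: as) occ j t = gg as occ j t + (if t < a ∧ a ≤ j then 1 else 0) := by
  unfold gg
  rw [cnt_cons, cnt_cons]
  split_ifs <;> omega

lemma gg_insert (as : List ℕ) (occ : Finset ℕ) {p : ℕ} (hpo : p ∉ occ) (j t : ℕ) :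
    gg as (insert p occ) j t = gg as occ j t + (if t < p ∧ p ≤ j then 1 else 0) := by
  unfold gg
  have : freeC occ t j = freeC (insert p occ) t j + (if t < p ∧ p ≤ j then 1 else 0) := by
    unfold freeC
    have : (Finset.Ioc t j).filter (· ∉ occ) =
        insert p ((Finset.Ioc t j).filter (· ∉ insert p occ)) ∨
        ((Finset.Ioc t j).filter (· ∉ occ) =
        ((Finset.Ioc t j).filter (· ∉ insert p occ)) ∧ ¬(t < p ∧ p ≤ j)) := by
      by_cases hp : t < p ∧ p ≤ j
      · left
        ext q
        simp only [Finset.mem_insert, Finset.mem_filter, Finset.mem_Ioc] at *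
        constructor
        · intro ⟨hq1, hq2⟩
          by_cases hqp : q = p
          · exact Or.inl hqp
          · exact Or.inr ⟨hq1, by simp [hqp, hq2]⟩
        · rintro (rfl | ⟨hq1, hq2⟩)
          · exact ⟨⟨hp.1, hp.2⟩, hpo⟩
          · exact ⟨hq1, fun hq => hq2 (Or.inr hq)⟩
      · right
        refine ⟨?_, hp⟩
        ext q
        simp only [Finset.mem_filter, Finset.mem_Ioc, Finset.mem_insert] at *
        constructor
        · intro ⟨hq1, hq2⟩
          refine ⟨hq1, ?_⟩
          rintro (rfl | hq)
          · exact hp ⟨hq1.1, hq1.2⟩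
          · exact hq2 hq
        · intro ⟨hq1, hq2⟩
          exact ⟨hq1, fun hq => hq2 (Or.inr hq)⟩
    rcases this with heq | ⟨heq, hnp⟩
    · rw [heq, Finset.card_insert_of_notMem (by simp)]
      have hp : t < p ∧ p ≤ j := by
        by_contra hc
        have : p ∈ (Finset.Ioc t j).filter (· ∉ occ) := heq ▸ Finset.mem_insert_self _ _
        simp only [Finset.mem_filter, Finset.mem_Ioc] at this
        exact hc ⟨this.1.1, this.1.2⟩
      simp [hp]
    · simp [heq, hnp]
  omega

lemma FF_step (a p j : ℕ) (as : List ℕ) (occ : Finset ℕ)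
    (ha : 1 ≤ a) (hap : a ≤ p) (hpo : p ∉ occ)
    (hfull : ∀ q, a ≤ q → q < p → q ∈ occ) :
    FF (a :: as) occ j = FF as (insert p occ) j + (if a ≤ j ∧ j < p then 1 else 0) := by
  have hmem : ∀ t, t ∈ Finset.range (j+1) → t ≤ j := fun t ht => by
    have := Finset.mem_range.mp ht; omega
  have hG1 : ∀ t ∈ Finset.range (j+1),
      gg (a :: as) occ j t = gg as occ j t + (if t < a ∧ a ≤ j then 1 else 0) :=
    fun t ht => gg_cons a as occ (hmem t ht)
  have hG2 : ∀ t, gg as (insert p occ) j t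
      = gg as occ j t + (if t < p ∧ p ≤ j then 1 else 0) :=
    fun t => gg_insert as occ hpo j t
  unfold FF
  by_cases hja : a ≤ j
  · by_cases hpj : p ≤ j
    · rw [if_neg (by omega : ¬(a ≤ j ∧ j < p)), add_zero]
      apply le_antisymm
      · apply Finset.sup'_le
        intro t ht
        calc gg (a :: as) occ j t ≤ gg as (insert p occ) j t := by
              rw [hG1 t ht, hG2 t]; split_ifs <;> omega
          _ ≤ _ := Finset.le_sup' _ ht
      · apply Finset.sup'_le
        intro t ht
        rcases lt_or_ge t a with hta | hat
        · calc gg as (insert p occ) j t = gg (a::as) occ j t := by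
                rw [hG1 t ht, hG2 t]; split_ifs <;> omega
            _ ≤ _ := Finset.le_sup' _ ht
        · rcases lt_or_ge t p with htp | hpt
          · have hmono : gg as occ j t ≤ gg as occ j (a-1) :=
              gg_mono_occ as occ (by omega) (hmem t ht)
                (fun q h1 h2 => hfull q (by omega) (by omega))
            have hmm : a - 1 ∈ Finset.range (j+1) := Finset.mem_range.mpr (by omega)
            calc gg as (insert p occ) j t ≤ gg as occ j (a-1) + 1 := by
                  rw [hG2 t]; split_ifs <;> omega
              _ = gg (a::as) occ j (a-1) := by rw [hG1 _ hmm]; split_ifs <;> omega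
              _ ≤ _ := Finset.le_sup' _ hmm
          · calc gg as (insert p occ) j t ≤ gg (a::as) occ j t := by
                  rw [hG1 t ht, hG2 t]; split_ifs <;> omega
              _ ≤ _ := Finset.le_sup' _ ht
    · rw [if_pos (by omega : a ≤ j ∧ j < p)]
      have hFF2 : (Finset.range (j+1)).sup' Finset.nonempty_range_add_one (gg as (insert p occ) j)
          = (Finset.range (j+1)).sup' Finset.nonempty_range_add_one (gg as occ j) := by
        apply Finset.sup'_congr _ rfl
        intro t ht
        rw [hG2 t]; split_ifs <;> omega
      rw [hFF2]
      apply le_antisymm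
      · apply Finset.sup'_le
        intro t ht
        rw [hG1 t ht]
        have := Finset.le_sup' (gg as occ j) ht
        split_ifs <;> omega
      · obtain ⟨t₀, ht₀, hmax⟩ :=
          Finset.exists_mem_eq_sup' Finset.nonempty_range_add_one (gg as occ j)
        rcases lt_or_ge t₀ a with h0 | h0
        · have heq : gg (a::as) occ j t₀ = gg as occ j t₀ + 1 := by
            rw [hG1 t₀ ht₀]; split_ifs <;> omega
          have hle := Finset.le_sup' (gg (a::as) occ j) ht₀
          rw [heq] at hle
          omega
        · have hmono : gg as occ j t₀ ≤ gg as occ j (a-1) :=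
            gg_mono_occ as occ (by omega) (hmem t₀ ht₀)
              (fun q h1 h2 => hfull q (by omega) (by have := hmem t₀ ht₀; omega))
          have hmm : a - 1 ∈ Finset.range (j+1) := Finset.mem_range.mpr (by omega)
          have heq : gg (a::as) occ j (a-1) = gg as occ j (a-1) + 1 := by
            rw [hG1 _ hmm]; split_ifs <;> omega
          have hle := Finset.le_sup' (gg (a::as) occ j) hmm
          rw [heq] at hle
          omega
  · rw [if_neg (by omega : ¬(a ≤ j ∧ j < p)), add_zero]
    apply Finset.sup'_congr _ rfl
    intro t ht
    rw [hG1 t ht, hG2 t]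
    split_ifs <;> omega

lemma head_spec {m a p : ℕ} {occ : Finset ℕ}
    (hh : ((List.range' a (m + 1 - a)).filter fun j => decide (j ∉ occ)).head? = some p) :
    a ≤ p ∧ p ≤ m ∧ p ∉ occ ∧ (∀ q, a ≤ q → q < p → q ∈ occ) := by
  have hmemp : p ∈ (List.range' a (m + 1 - a)).filter fun j => decide (j ∉ occ) :=
    List.mem_of_mem_head? (by rw [hh]; simp)
  rw [List.mem_filter] at hmemp
  obtain ⟨hpr, hpocc⟩ := hmemp
  rw [List.mem_range'_1] at hpr
  have hpocc' : p ∉ occ := by simpa using hpocc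
  refine ⟨hpr.1, by omega, hpocc', ?_⟩
  intro q hq1 hq2
  by_contra hqocc
  have hmemq : q ∈ (List.range' a (m + 1 - a)).filter fun j => decide (j ∉ occ) := by
    rw [List.mem_filter, List.mem_range'_1]
    exact ⟨⟨hq1, by omega⟩, by simpa using hqocc⟩
  have hpw : ((List.range' a (m + 1 - a)).filter fun j => decide (j ∉ occ)).Pairwise (· < ·) :=
    List.Pairwise.sublist List.filter_sublist List.pairwise_lt_range'
  cases hl : (List.range' a (m + 1 - a)).filter fun j => decide (j ∉ occ) with
  | nil => rw [hl] at hh; simp at hh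
  | cons x tl =>
    rw [hl] at hh hpw hmemq
    simp only [List.head?_cons, Option.some_inj] at hh
    subst hh
    rcases List.mem_cons.mp hmemq with rfl | hqtl
    · omega
    · have := (List.pairwise_cons.mp hpw).1 q hqtl
      omega

lemma park_cons {m a : ℕ} {as : List ℕ} {occ : Finset ℕ} {ps : List ℕ}
    (hp : park m (a :: as) occ = some ps) :
    ∃ p ps', ps = p :: ps' ∧ a ≤ p ∧ p ≤ m ∧ p ∉ occ ∧
      (∀ q, a ≤ q → q < p → q ∈ occ) ∧ park m as (insert p occ) = some ps' := by
  rw [park] at hp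
  cases hh : ((List.range' a (m + 1 - a)).filter fun j => decide (j ∉ occ)).head? with
  | none => rw [hh] at hp; simp at hp
  | some p =>
    rw [hh] at hp
    simp only [Option.map_eq_some_iff] at hp
    obtain ⟨ps', hps', rfl⟩ := hp
    obtain ⟨h1, h2, h3, h4⟩ := head_spec hh
    exact ⟨p, ps', rfl, h1, h2, h3, h4, hps'⟩

lemma FF_nil (occ : Finset ℕ) (j : ℕ) : FF [] occ j = 0 := by
  refine le_antisymm (Finset.sup'_le _ _ fun t ht => ?_) (FF_nonneg [] occ j)
  have : cnt [] j = 0 := by simp [cnt]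
  have h2 : cnt [] t = 0 := by simp [cnt]
  have h3 : 0 ≤ freeC occ t j := Nat.cast_nonneg _
  unfold gg
  omega

lemma park_disp (m : ℕ) : ∀ (β : List ℕ) (occ : Finset ℕ) (ps : List ℕ),
    (∀ a ∈ β, 1 ≤ a) → park m β occ = some ps →
    (((ps.zip β).map fun x => (x.1 - x.2 : ℕ)).sum : ℤ) = ∑ j ∈ Finset.range m, FF β occ j
  | [], occ, ps, _, hp => by
      rw [park] at hp
      simp only [Option.some_inj] at hp
      subst hp
      simp [FF_nil]
  | a :: as, occ, ps, hβ, hp => by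
      obtain ⟨p, ps', rfl, hap, hpm, hpo, hfull, hp'⟩ := park_cons hp
      have ha : 1 ≤ a := hβ a (by simp)
      have ih := park_disp m as (insert p occ) ps'
        (fun b hb => hβ b (List.mem_cons_of_mem _ hb)) hp'
      have hstep : ∀ j ∈ Finset.range m, FF (a :: as) occ j
          = FF as (insert p occ) j + (if a ≤ j ∧ j < p then 1 else 0) :=
        fun j _ => FF_step a p j as occ ha hap hpo hfull
      rw [Finset.sum_congr rfl hstep, Finset.sum_add_distrib]
      have hind : ∑ j ∈ Finset.range m, (if a ≤ j ∧ j < p then (1:ℤ) else 0)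
          = (p : ℤ) - a := by
        have hflt : (Finset.range m).filter (fun j => a ≤ j ∧ j < p) = Finset.Ico a p := by
          ext q
          simp only [Finset.mem_filter, Finset.mem_range, Finset.mem_Ico]
          omega
        rw [← Finset.sum_filter, hflt, Finset.sum_const, Nat.card_Ico, nsmul_eq_mul, mul_one]
        push_cast [Nat.cast_sub hap]
        ring
      rw [hind, ← ih]
      simp only [List.zip_cons_cons, List.map_cons, List.sum_cons]
      push_cast [Nat.cast_sub hap]
      ring

lemma park_F_zero (m : ℕ) : ∀ (β : List ℕ) (occ : Finset ℕ) (ps : List ℕ),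
    (∀ a ∈ β, 1 ≤ a) → park m β occ = some ps → FF β occ m = 0
  | [], occ, ps, _, _ => FF_nil occ m
  | a :: as, occ, ps, hβ, hp => by
      obtain ⟨p, ps', rfl, hap, hpm, hpo, hfull, hp'⟩ := park_cons hp
      have ha : 1 ≤ a := hβ a (by simp)
      have ih := park_F_zero m as (insert p occ) ps'
        (fun b hb => hβ b (List.mem_cons_of_mem _ hb)) hp'
      rw [FF_step a p m as occ ha hap hpo hfull, ih, if_neg (by omega)]
      ring

lemma park_success (m : ℕ) : ∀ (β : List ℕ) (occ : Finset ℕ),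
    (∀ a ∈ β, 1 ≤ a ∧ a ≤ m) → FF β occ m = 0 → (park m β occ).isSome
  | [], occ, _, _ => by rw [park]; rfl
  | a :: as, occ, hβ, hF => by
      have ha : 1 ≤ a ∧ a ≤ m := hβ a (by simp)
      cases hh : ((List.range' a (m + 1 - a)).filter fun j => decide (j ∉ occ)).head? with
      | none =>
        exfalso
        have hnil : ((List.range' a (m + 1 - a)).filter fun j => decide (j ∉ occ)) = [] :=
          List.head?_eq_none_iff.mp hh
        have hocc : ∀ q, a ≤ q → q ≤ m → q ∈ occ := by
          intro q h1 h2
          by_contra hq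
          have : q ∈ ((List.range' a (m + 1 - a)).filter fun j => decide (j ∉ occ)) := by
            rw [List.mem_filter, List.mem_range'_1]
            exact ⟨⟨h1, by omega⟩, by simpa using hq⟩
          rw [hnil] at this
          simp at this
        have hfree : freeC occ (a-1) m = 0 := by
          unfold freeC
          rw [Nat.cast_eq_zero, Finset.card_eq_zero, Finset.filter_eq_empty_iff]
          intro q hq
          simp only [Finset.mem_Ioc] at hq
          simp [hocc q (by omega) hq.2]
        have hcnt : cnt (a :: as) m - cnt (a :: as) (a-1) ≥ 1 := by
          rw [cnt_cons, cnt_cons, if_pos ha.2, if_neg (by omega)]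
          have := cnt_mono as (show a - 1 ≤ m by omega)
          omega
        have hgg : 1 ≤ gg (a :: as) occ m (a-1) := by
          unfold gg; omega
        have hle := Finset.le_sup' (gg (a :: as) occ m)
          (Finset.mem_range.mpr (show a - 1 < m + 1 by omega))
        unfold FF at hF
        omega
      | some p =>
        obtain ⟨hap, hpm, hpo, hfull⟩ := head_spec hh
        have hFas : FF as (insert p occ) m = 0 := by
          have := FF_step a p m as occ ha.1 hap hpo hfull
          rw [hF, if_neg (by omega)] at this
          have h0 := FF_nonneg as (insert p occ) m
          omega
        have ih := park_success m as (insert p occ)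
          (fun b hb => hβ b (List.mem_cons_of_mem _ hb)) hFas
        rw [park, hh]
        simpa using ih


lemma cnt_list_finset {γ : Type*} (X : Finset γ) (l : List γ)
    (hl : (↑l : Multiset γ) = X.val) (f : γ → ℕ) (t : ℕ) :
    cnt (l.map f) t = ((X.filter fun x => f x ≤ t).card : ℤ) := by
  have h1 : List.countP ((fun a => decide (a ≤ t)) ∘ f) l
      = (X.filter fun x => f x ≤ t).card := by
    have h2 : Multiset.countP (fun x => f x ≤ t) (↑l : Multiset γ)
        = List.countP ((fun a => decide (a ≤ t)) ∘ f) l := Multiset.coe_countP _ _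
    rw [← h2, hl, Multiset.countP_eq_card_filter]
    rfl
  unfold cnt
  rw [List.countP_map, h1]

lemma cnt_sort {n : ℕ} (X : Finset (Fin n)) (α : Fin n → ℕ) (t : ℕ) :
    cnt ((X.sort (· ≤ ·)).map α) t = ((X.filter fun x => α x ≤ t).card : ℤ) :=
  cnt_list_finset X _ (Finset.sort_eq X (· ≤ ·)) α t

lemma cnt_ofFn {n : ℕ} (α : Fin n → ℕ) (t : ℕ) :
    cnt (List.ofFn α) t = (((Finset.univ : Finset (Fin n)).filter fun x => α x ≤ t).card : ℤ) := by
  rw [List.ofFn_eq_map]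
  exact cnt_list_finset Finset.univ _ (by rw [Fin.univ_def]) α t

lemma card_filter_split {γ : Type*} (X : Finset γ) (f : γ → ℕ) {t u : ℕ} (h : t ≤ u) :
    ((X.filter fun x => f x ≤ u).card : ℤ) - ((X.filter fun x => f x ≤ t).card : ℤ)
      = ((X.filter fun x => t < f x ∧ f x ≤ u).card : ℤ) := by
  have key := Finset.card_filter_add_card_filter_not
    (s := X.filter fun x => f x ≤ u) (p := fun x => f x ≤ t)
  rw [Finset.filter_filter, Finset.filter_filter] at key
  have e1 : (X.filter fun x => (f x ≤ u) ∧ (f x ≤ t)) = X.filter fun x => f x ≤ t := by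
    apply Finset.filter_congr; intro x _; constructor <;> intro hh
    · exact hh.2
    · exact ⟨by omega, hh⟩
  have e2 : (X.filter fun x => (f x ≤ u) ∧ ¬(f x ≤ t)) =
      X.filter fun x => t < f x ∧ f x ≤ u := by
    apply Finset.filter_congr; intro x _; constructor <;> intro hh
    · exact ⟨by omega, hh.1⟩
    · exact ⟨hh.2, by omega⟩
  rw [e1, e2] at key
  omega

lemma cnt_diff_mono {γ : Type*} {S T : Finset γ} (hST : S ⊆ T) (f : γ → ℕ) {t u : ℕ}
    (h : t ≤ u) :
    ((S.filter fun x => f x ≤ u).card : ℤ) - ((S.filter fun x => f x ≤ t).card : ℤ)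
    ≤ ((T.filter fun x => f x ≤ u).card : ℤ) - ((T.filter fun x => f x ≤ t).card : ℤ) := by
  rw [card_filter_split S f h, card_filter_split T f h]
  exact_mod_cast Finset.card_le_card (Finset.filter_subset_filter _ hST)

/-- domination: if counts of `β` in intervals `(t, j]` dominate those of `β'`,
then `FF β' ≤ FF β`. -/
lemma FF_le_of_cnt_le (β' β : List ℕ) (occ : Finset ℕ) (j : ℕ)
    (hd : ∀ t, t ≤ j → cnt β' j - cnt β' t ≤ cnt β j - cnt β t) :
    FF β' occ j ≤ FF β occ j := by
  apply Finset.sup'_le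
  intro t ht
  have ht' : t ≤ j := by have := Finset.mem_range.mp ht; omega
  calc gg β' occ j t ≤ gg β occ j t := by
        have := hd t ht'; unfold gg; omega
    _ ≤ _ := Finset.le_sup' _ ht

/-- the abstract supermodularity inequality for sups -/
lemma key_sup (j a : ℕ) (_ha : 1 ≤ a) (gS gT : ℕ → ℤ)
    (hmono : ∀ t u, t < a → a ≤ u → u ≤ j → gT u - gS u ≤ gT t - gS t) :
    (Finset.range (j+1)).sup' Finset.nonempty_range_add_one
        (fun t => gS t + (if t < a ∧ a ≤ j then 1 else 0))
      + (Finset.range (j+1)).sup' Finset.nonempty_range_add_one gT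
    ≤ (Finset.range (j+1)).sup' Finset.nonempty_range_add_one
        (fun t => gT t + (if t < a ∧ a ≤ j then 1 else 0))
      + (Finset.range (j+1)).sup' Finset.nonempty_range_add_one gS := by
  by_cases haj : a ≤ j
  · obtain ⟨u₀, hu₀, hmaxT⟩ :=
      Finset.exists_mem_eq_sup' (Finset.nonempty_range_add_one (n := j)) gT
    have hu₀j : u₀ ≤ j := by have := Finset.mem_range.mp hu₀; omega
    have h1 : (Finset.range (j+1)).sup' Finset.nonempty_range_add_one
        (fun t => gS t + (if t < a ∧ a ≤ j then 1 else 0)) + gT u₀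
      ≤ (Finset.range (j+1)).sup' Finset.nonempty_range_add_one
          (fun t => gT t + (if t < a ∧ a ≤ j then 1 else 0))
        + (Finset.range (j+1)).sup' Finset.nonempty_range_add_one gS := by
      rw [← le_sub_iff_add_le]
      apply Finset.sup'_le
      intro t ht
      rw [le_sub_iff_add_le]
      have ht' : t ≤ j := by have := Finset.mem_range.mp ht; omega
      have hSle := Finset.le_sup' gS ht
      have hSu₀ := Finset.le_sup' gS hu₀
      have hTb_t := Finset.le_sup'
        (fun t => gT t + (if t < a ∧ a ≤ j then 1 else 0)) ht
      have hTb_u := Finset.le_sup'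
        (fun t => gT t + (if t < a ∧ a ≤ j then 1 else 0)) hu₀
      rcases lt_or_ge t a with hta | hat
      · rcases lt_or_ge u₀ a with hua | hau
        · rw [if_pos ⟨hta, haj⟩] at hTb_t ⊢
          rw [if_pos ⟨hua, haj⟩] at hTb_u
          linarith
        · have hm := hmono t u₀ hta hau hu₀j
          rw [if_pos ⟨hta, haj⟩] at hTb_t ⊢
          linarith
      · rw [if_neg (by omega)] at hTb_t ⊢
        have h0 : (0:ℤ) ≤ (if u₀ < a ∧ a ≤ j then 1 else 0) := by split_ifs <;> norm_num
        linarith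
    rw [← hmaxT] at h1
    exact h1
  · have e1 : ∀ (g : ℕ → ℤ), (Finset.range (j+1)).sup' Finset.nonempty_range_add_one
        (fun t => g t + (if t < a ∧ a ≤ j then 1 else 0))
        = (Finset.range (j+1)).sup' Finset.nonempty_range_add_one g := by
      intro g
      apply Finset.sup'_congr _ rfl
      intro t _
      rw [if_neg (by omega), add_zero]
    rw [e1, e1, add_comm]

/-- parking games are supermodular:
`c_α(S ∪ {i}) − c_α(S) ≤ c_α(T ∪ {i}) − c_α(T)` for all `i` and
`S ⊆ T ⊆ [n] \ {i}` (stated additively to avoid truncated subtraction). -/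
theorem stmt12 (n : ℕ) (α : Fin n → ℕ) (h : IsPF n n (List.ofFn α))
    (i : Fin n) (S T : Finset (Fin n)) (hST : S ⊆ T) (hiT : i ∉ T) :
    gameCost n α (insert i S) + gameCost n α T ≤
      gameCost n α (insert i T) + gameCost n α S := by
  obtain ⟨hlen, hmem, hsome⟩ := h
  set a := α i with ha_def
  have haB : 1 ≤ a ∧ a ≤ n := hmem a (List.mem_ofFn.mpr ⟨i, rfl⟩)
  have hpref : ∀ X : Finset (Fin n), ∀ b ∈ (X.sort (· ≤ ·)).map α, 1 ≤ b ∧ b ≤ n := by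
    intro X b hb
    rw [List.mem_map] at hb
    obtain ⟨x, _, rfl⟩ := hb
    exact hmem _ (List.mem_ofFn.mpr ⟨x, rfl⟩)
  obtain ⟨psf, hpsf⟩ := Option.isSome_iff_exists.mp hsome
  have hFfull : FF (List.ofFn α) ∅ n = 0 :=
    park_F_zero n _ ∅ psf (fun b hb => (hmem b hb).1) hpsf
  have hcoal : ∀ X : Finset (Fin n),
      ((disp n ((X.sort (· ≤ ·)).map α) : ℤ)
        = ∑ j ∈ Finset.range n, FF ((X.sort (· ≤ ·)).map α) ∅ j) := by
    intro X
    have hdom : FF ((X.sort (· ≤ ·)).map α) ∅ n ≤ FF (List.ofFn α) ∅ n := by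
      apply FF_le_of_cnt_le
      intro t ht
      rw [cnt_sort, cnt_sort, cnt_ofFn, cnt_ofFn]
      exact cnt_diff_mono (Finset.subset_univ X) α ht
    have hF0 : FF ((X.sort (· ≤ ·)).map α) ∅ n = 0 :=
      le_antisymm (hFfull ▸ hdom) (FF_nonneg _ _ _)
    have hs := park_success n _ ∅ (hpref X) hF0
    obtain ⟨ps, hps⟩ := Option.isSome_iff_exists.mp hs
    have hd := park_disp n _ ∅ ps (fun b hb => (hpref X b hb).1) hps
    rw [← hd]
    unfold disp
    rw [hps]
  have hins : ∀ (X : Finset (Fin n)), i ∉ X → ∀ j, j ∈ Finset.range n →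
      FF (((insert i X).sort (· ≤ ·)).map α) ∅ j
        = (Finset.range (j+1)).sup' Finset.nonempty_range_add_one
            (fun t => gg ((X.sort (· ≤ ·)).map α) ∅ j t
              + (if t < a ∧ a ≤ j then 1 else 0)) := by
    intro X hiX j hj
    apply Finset.sup'_congr _ rfl
    intro t ht
    have ht' : t ≤ j := by have := Finset.mem_range.mp ht; omega
    have hit : ∀ u, ((insert i X).filter fun x => α x ≤ u).card
        = (X.filter fun x => α x ≤ u).card + (if a ≤ u then 1 else 0) := by
      intro u
      rw [Finset.filter_insert]
      split_ifs with hcond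
      · rw [Finset.card_insert_of_notMem (fun hmemf => hiX (Finset.mem_filter.mp hmemf).1)]
      · rw [add_zero]
    unfold gg
    rw [cnt_sort, cnt_sort, cnt_sort, cnt_sort, hit j, hit t]
    split_ifs <;> push_cast <;> omega
  have main : (gameCost n α (insert i S) : ℤ) + (gameCost n α T : ℤ)
      ≤ (gameCost n α (insert i T) : ℤ) + (gameCost n α S : ℤ) := by
    unfold gameCost
    rw [hcoal (insert i S), hcoal T, hcoal (insert i T), hcoal S]
    rw [← Finset.sum_add_distrib, ← Finset.sum_add_distrib]
    apply Finset.sum_le_sum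
    intro j hj
    rw [hins S (fun hiS => hiT (hST hiS)) j hj, hins T hiT j hj]
    unfold FF
    apply key_sup j a haB.1
    intro t u htu hau huj
    unfold gg
    rw [cnt_sort, cnt_sort, cnt_sort, cnt_sort, cnt_sort, cnt_sort]
    have hcd := cnt_diff_mono hST α (show t ≤ u by omega)
    omega
  exact_mod_cast main
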